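/- arXiv:2503.22297 — 5 statements merged into one kernel-verified Lean document; each statement's English description precedes it below -/
import Mathlib

section
/- Let (S, μ) be a measure space, let k > 0 and q > 0, and set D := q/k. Let v : S × ℝ → ℂ be measurable and such that for μ-almost every s ∈ S the function x ↦ v(s, x) is continuously differentiable on [0, D]; denote by ∂₂v its derivative in the second variable. Assume (s,x) ↦ |v(s,x)|² and (s,x) ↦ |∂₂v(s,x)|² are integrable on S × (0, D) and s ↦ |v(s, D)|² is integrable on S. Then k² ∫_S ∫₀^D |v(s,x)|² dx dμ(s) ≤ 2qk ∫_S |v(s, D)|² dμ(s) + 4q² ∫_S ∫₀^D |∂₂v(s,x)|² dx dμ(s). -/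
open MeasureTheory Set

lemma aux_cs (D : ℝ) (hD0 : 0 < D) (g : ℝ → ℂ)
    (hg : ContinuousOn g (Icc (0 : ℝ) D)) :
    (∫ t in (0:ℝ)..D, ‖g t‖) ^ 2 ≤ D * ∫ t in (0:ℝ)..D, ‖g t‖ ^ 2 := by
  set ν := volume.restrict (Ioc (0:ℝ) D) with hν
  have hgc : ContinuousOn (fun t => ‖g t‖) (Icc (0:ℝ) D) := hg.norm
  have hmes : MeasurableSet (Ioc (0:ℝ) D) := measurableSet_Ioc
  have hgm : AEStronglyMeasurable (fun t => ‖g t‖) ν := by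
    exact (hgc.mono Ioc_subset_Icc_self).aestronglyMeasurable hmes
  have hgi2 : Integrable (fun t => ‖g t‖ ^ 2) ν := by
    have : ContinuousOn (fun t => ‖g t‖ ^ 2) (Icc (0:ℝ) D) := hgc.pow 2
    exact (this.integrableOn_compact isCompact_Icc).mono_set Ioc_subset_Icc_self
  have hg2 : MemLp (fun t => ‖g t‖) 2 ν :=
    (memLp_two_iff_integrable_sq hgm).2 hgi2
  have h1 : MemLp (fun _ : ℝ => (1:ℝ)) 2 ν := by
    have : IsFiniteMeasure ν := by
      constructor
      rw [hν, Measure.restrict_apply_univ, Real.volume_Ioc]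
      exact ENNReal.ofReal_lt_top
    exact memLp_const 1
  have hconj : Real.HolderConjugate 2 2 := ⟨by norm_num, by norm_num, by norm_num⟩
  have hH := integral_mul_le_Lp_mul_Lq_of_nonneg (μ := ν) hconj
    (f := fun _ => (1:ℝ)) (g := fun t => ‖g t‖)
    (Filter.Eventually.of_forall fun _ => zero_le_one)
    (Filter.Eventually.of_forall fun t => norm_nonneg _)
    (by simpa using h1) (by simpa using hg2)
  have hpow : ∀ x : ℝ, 0 ≤ x → x ^ (2:ℝ) = x ^ 2 := by
    intro x hx
    rw [show (2:ℝ) = ((2:ℕ) : ℝ) by norm_num, Real.rpow_natCast]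
  have hroot : ∀ x : ℝ, 0 ≤ x → (x ^ ((1:ℝ)/2)) ^ 2 = x := by
    intro x hx
    rw [← Real.rpow_natCast (x ^ ((1:ℝ)/2)) 2, ← Real.rpow_mul hx]
    norm_num
  have hone : (∫ _ : ℝ, (1:ℝ) ^ (2:ℝ) ∂ν) = D := by
    simp [hν, Real.volume_Ioc, ENNReal.toReal_ofReal hD0.le, hD0.le]
  have hgr : (∫ t, ‖g t‖ ^ (2:ℝ) ∂ν) = ∫ t, ‖g t‖ ^ 2 ∂ν := by
    refine integral_congr_ae (Filter.Eventually.of_forall fun t => ?_)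
    exact hpow _ (norm_nonneg _)
  rw [hone, hgr] at hH
  simp only [one_mul] at hH
  have hA : (∫ t in (0:ℝ)..D, ‖g t‖) = ∫ t, ‖g t‖ ∂ν := by
    rw [intervalIntegral.integral_of_le hD0.le]
  have hB : (∫ t in (0:ℝ)..D, ‖g t‖ ^ 2) = ∫ t, ‖g t‖ ^ 2 ∂ν := by
    rw [intervalIntegral.integral_of_le hD0.le]
  rw [hA, hB]
  set A := ∫ t, ‖g t‖ ∂ν with hAdef
  set B := ∫ t, ‖g t‖ ^ 2 ∂ν with hBdef
  have hBnn : 0 ≤ B := integral_nonneg fun t => by positivity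
  have hAnn : 0 ≤ A := integral_nonneg fun t => norm_nonneg _
  -- hH : A ≤ D ^ (1/2) * B ^ (1/2)
  have hsq : (D ^ ((1:ℝ)/2) * B ^ ((1:ℝ)/2)) ^ 2 = D * B := by
    rw [mul_pow, hroot D hD0.le, hroot B hBnn]
  calc A ^ 2 ≤ (D ^ ((1:ℝ)/2) * B ^ ((1:ℝ)/2)) ^ 2 := by
        apply pow_le_pow_left₀ hAnn hH
    _ = D * B := hsq

lemma aux_pointwise (D : ℝ) (hD0 : 0 < D) (f g : ℝ → ℂ)
    (hderiv : ∀ x ∈ Icc (0:ℝ) D, HasDerivWithinAt f (g x) (Icc (0:ℝ) D) x)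
    (hg : ContinuousOn g (Icc (0:ℝ) D)) :
    (∫ x in Ioo (0:ℝ) D, ‖f x‖ ^ 2) ≤
      2 * D * ‖f D‖ ^ 2 + 2 * D ^ 2 * ∫ x in Ioo (0:ℝ) D, ‖g x‖ ^ 2 := by
  have hfc : ContinuousOn f (Icc (0:ℝ) D) := fun x hx =>
    (hderiv x hx).continuousWithinAt
  have hgi : IntervalIntegrable g volume 0 D := by
    apply ContinuousOn.intervalIntegrable
    rwa [uIcc_of_le hD0.le]
  have hgni : IntervalIntegrable (fun t => ‖g t‖) volume 0 D := hgi.norm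
  have hAnn : 0 ≤ ∫ t in (0:ℝ)..D, ‖g t‖ :=
    intervalIntegral.integral_nonneg hD0.le fun t _ => norm_nonneg _
  set A := ∫ t in (0:ℝ)..D, ‖g t‖ with hAdef
  have hCS : A ^ 2 ≤ D * ∫ t in (0:ℝ)..D, ‖g t‖ ^ 2 := aux_cs D hD0 g hg
  -- pointwise bound on ‖f x‖
  have hbound : ∀ x ∈ Ioo (0:ℝ) D, ‖f x‖ ^ 2 ≤ 2 * ‖f D‖ ^ 2 + 2 * A ^ 2 := by
    intro x hx
    have hxD : x ≤ D := hx.2.le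
    have hftc : (∫ t in x..D, g t) = f D - f x := by
      apply intervalIntegral.integral_eq_sub_of_hasDeriv_right_of_le hxD
      · exact hfc.mono (Icc_subset_Icc hx.1.le le_rfl)
      · intro t ht
        have ht' : t ∈ Ioo (0:ℝ) D := ⟨lt_trans hx.1 ht.1, ht.2⟩
        exact ((hderiv t (Ioo_subset_Icc_self ht')).hasDerivAt
          (Icc_mem_nhds ht'.1 ht'.2)).hasDerivWithinAt
      · apply hgi.mono_set
        rw [uIcc_of_le hxD, uIcc_of_le hD0.le]
        exact Icc_subset_Icc hx.1.le le_rfl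
    have hnorm : ‖f x‖ ≤ ‖f D‖ + A := by
      have h1 : ‖f x‖ ≤ ‖f D‖ + ‖∫ t in x..D, g t‖ := by
        have : f x = f D - ∫ t in x..D, g t := by rw [hftc]; ring
        rw [this]
        exact norm_sub_le _ _
      have h2 : ‖∫ t in x..D, g t‖ ≤ ∫ t in x..D, ‖g t‖ :=
        intervalIntegral.norm_integral_le_integral_norm hxD
      have h3 : (∫ t in x..D, ‖g t‖) ≤ A := by
        apply intervalIntegral.integral_mono_interval hx.1.le hxD le_rfl
        · exact Filter.Eventually.of_forall fun t => norm_nonneg _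
        · exact hgni
      linarith
    have hsq2 : ‖f x‖ * ‖f x‖ ≤ (‖f D‖ + A) * (‖f D‖ + A) :=
      mul_le_mul hnorm hnorm (norm_nonneg _) (by positivity)
    nlinarith [sq_nonneg (‖f D‖ - A), hsq2]
  -- integrate the pointwise bound
  have hfint : IntegrableOn (fun x => ‖f x‖ ^ 2) (Ioo (0:ℝ) D) := by
    have : ContinuousOn (fun x => ‖f x‖ ^ 2) (Icc (0:ℝ) D) := hfc.norm.pow 2
    exact (this.integrableOn_compact isCompact_Icc).mono_set Ioo_subset_Icc_self
  have hcint : IntegrableOn (fun _ : ℝ => 2 * ‖f D‖ ^ 2 + 2 * A ^ 2) (Ioo (0:ℝ) D) := by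
    refine integrableOn_const ?_
    rw [Real.volume_Ioo]
    exact ENNReal.ofReal_ne_top
  have hmono : (∫ x in Ioo (0:ℝ) D, ‖f x‖ ^ 2) ≤
      ∫ _ in Ioo (0:ℝ) D, (2 * ‖f D‖ ^ 2 + 2 * A ^ 2) :=
    setIntegral_mono_on hfint hcint measurableSet_Ioo hbound
  have hconst : (∫ _ in Ioo (0:ℝ) D, (2 * ‖f D‖ ^ 2 + 2 * A ^ 2)) =
      D * (2 * ‖f D‖ ^ 2 + 2 * A ^ 2) := by
    rw [setIntegral_const, measureReal_def, Real.volume_Ioo, ENNReal.toReal_ofReal (by linarith),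
      smul_eq_mul, sub_zero]
  have hgIoo : (∫ t in (0:ℝ)..D, ‖g t‖ ^ 2) = ∫ x in Ioo (0:ℝ) D, ‖g x‖ ^ 2 := by
    rw [intervalIntegral.integral_of_le hD0.le, integral_Ioc_eq_integral_Ioo]
  rw [hgIoo] at hCS
  calc (∫ x in Ioo (0:ℝ) D, ‖f x‖ ^ 2) ≤ D * (2 * ‖f D‖ ^ 2 + 2 * A ^ 2) := by
        rw [← hconst]; exact hmono
    _ ≤ 2 * D * ‖f D‖ ^ 2 + 2 * D ^ 2 * ∫ x in Ioo (0:ℝ) D, ‖g x‖ ^ 2 := by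
        nlinarith [norm_nonneg (f D), sq_nonneg A, hD0.le]

theorem stmt1 {S : Type*} [MeasurableSpace S] (μ : Measure S)
    (k q : ℝ) (hk : 0 < k) (hq : 0 < q) (D : ℝ) (hD : D = q / k)
    (v w : S × ℝ → ℂ) (hv : Measurable v)
    (hderiv : ∀ᵐ s ∂μ, ∀ x ∈ Icc (0 : ℝ) D,
      HasDerivWithinAt (fun y => v (s, y)) (w (s, x)) (Icc (0 : ℝ) D) x)
    (hwcont : ∀ᵐ s ∂μ, ContinuousOn (fun x => w (s, x)) (Icc (0 : ℝ) D))
    (hint1 : Integrable (fun p : S × ℝ => ‖v p‖ ^ 2)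
      (μ.prod (volume.restrict (Ioo (0 : ℝ) D))))
    (hint2 : Integrable (fun p : S × ℝ => ‖w p‖ ^ 2)
      (μ.prod (volume.restrict (Ioo (0 : ℝ) D))))
    (hint3 : Integrable (fun s => ‖v (s, D)‖ ^ 2) μ) :
    k ^ 2 * ∫ s, (∫ x in Ioo (0 : ℝ) D, ‖v (s, x)‖ ^ 2) ∂μ ≤
      2 * q * k * ∫ s, ‖v (s, D)‖ ^ 2 ∂μ +
        4 * q ^ 2 * ∫ s, (∫ x in Ioo (0 : ℝ) D, ‖w (s, x)‖ ^ 2) ∂μ := by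
  have hD0 : 0 < D := hD ▸ div_pos hq hk
  have hI : Integrable (fun s => ∫ x in Ioo (0:ℝ) D, ‖v (s, x)‖ ^ 2) μ :=
    hint1.integral_prod_left
  have hJ : Integrable (fun s => ∫ x in Ioo (0:ℝ) D, ‖w (s, x)‖ ^ 2) μ :=
    hint2.integral_prod_left
  have key : ∀ᵐ s ∂μ, k ^ 2 * (∫ x in Ioo (0:ℝ) D, ‖v (s, x)‖ ^ 2) ≤
      2 * q * k * ‖v (s, D)‖ ^ 2 +
        4 * q ^ 2 * ∫ x in Ioo (0:ℝ) D, ‖w (s, x)‖ ^ 2 := by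
    filter_upwards [hderiv, hwcont] with s h1 h2
    have hpt := aux_pointwise D hD0 (fun y => v (s, y)) (fun y => w (s, y)) h1 h2
    have hJnn : 0 ≤ ∫ x in Ioo (0:ℝ) D, ‖w (s, x)‖ ^ 2 :=
      integral_nonneg fun x => by positivity
    have hBnn : 0 ≤ ‖v (s, D)‖ ^ 2 := by positivity
    have h3 : k ^ 2 * (2 * D * ‖v (s, D)‖ ^ 2 +
        2 * D ^ 2 * ∫ x in Ioo (0:ℝ) D, ‖w (s, x)‖ ^ 2) =
        2 * q * k * ‖v (s, D)‖ ^ 2 +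
          2 * q ^ 2 * ∫ x in Ioo (0:ℝ) D, ‖w (s, x)‖ ^ 2 := by
      rw [hD]; field_simp
    have h4 := mul_le_mul_of_nonneg_left hpt (sq_nonneg k)
    rw [h3] at h4
    nlinarith [mul_nonneg (sq_nonneg q) hJnn]
  have hmono : (∫ s, k ^ 2 * (∫ x in Ioo (0:ℝ) D, ‖v (s, x)‖ ^ 2) ∂μ) ≤
      ∫ s, (2 * q * k * ‖v (s, D)‖ ^ 2 +
        4 * q ^ 2 * ∫ x in Ioo (0:ℝ) D, ‖w (s, x)‖ ^ 2) ∂μ :=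
    integral_mono_ae (hI.const_mul _) ((hint3.const_mul _).add (hJ.const_mul _)) key
  rw [integral_const_mul] at hmono
  rw [integral_add (hint3.const_mul _) (hJ.const_mul _), integral_const_mul,
    integral_const_mul] at hmono
  exact hmono
end

section
/- Let ψ : ℝ → ℂ be continuously differentiable on [0, ∞) with x ↦ |ψ(x)|² and x ↦ |ψ'(x)|² integrable on (0, ∞). Then for every τ ≥ 0 and every x ≥ 0 one has τ·|ψ(x)|² ≤ 2τ² ∫₀^∞ |ψ(s)|² ds + ∫₀^∞ |ψ'(s)|² ds. -/
open MeasureTheory Set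

theorem stmt3 (ψ ψ' : ℝ → ℂ)
    (hderiv : ∀ x ∈ Ici (0 : ℝ), HasDerivWithinAt ψ (ψ' x) (Ici (0 : ℝ)) x)
    (hcont : ContinuousOn ψ' (Ici (0 : ℝ)))
    (hint1 : IntegrableOn (fun x => ‖ψ x‖ ^ 2) (Ioi (0 : ℝ)))
    (hint2 : IntegrableOn (fun x => ‖ψ' x‖ ^ 2) (Ioi (0 : ℝ))) :
    ∀ τ ≥ (0 : ℝ), ∀ x ≥ (0 : ℝ),
      τ * ‖ψ x‖ ^ 2 ≤
        2 * τ ^ 2 * (∫ s in Ioi (0 : ℝ), ‖ψ s‖ ^ 2) +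
          ∫ s in Ioi (0 : ℝ), ‖ψ' s‖ ^ 2 := by
  intro τ hτ0 x hx
  set I := ∫ s in Ioi (0:ℝ), ‖ψ s‖ ^ 2 with hI
  set J := ∫ s in Ioi (0:ℝ), ‖ψ' s‖ ^ 2 with hJ
  have hI0 : 0 ≤ I := setIntegral_nonneg measurableSet_Ioi fun s _ => by positivity
  have hJ0 : 0 ≤ J := setIntegral_nonneg measurableSet_Ioi fun s _ => by positivity
  rcases eq_or_lt_of_le hτ0 with h0 | hτ
  · rw [← h0]; nlinarith
  -- continuity of ψ
  have hψc : ContinuousOn ψ (Ici (0:ℝ)) := fun s hs => (hderiv s hs).continuousWithinAt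
  -- the derivative of ‖ψ‖^2
  set D : ℝ → ℝ := fun s => 2 * ((starRingEnd ℂ) (ψ s) * ψ' s).re with hD
  have hDg : ∀ s ∈ Ici (0:ℝ), HasDerivWithinAt (fun t => ‖ψ t‖ ^ 2) (D s) (Ici (0:ℝ)) s := by
    intro s hs
    have hre : HasDerivWithinAt (fun t => (ψ t).re) ((ψ' s).re) (Ici (0:ℝ)) s :=
      (Complex.reCLM.hasFDerivAt.comp_hasDerivWithinAt s (hderiv s hs))
    have him : HasDerivWithinAt (fun t => (ψ t).im) ((ψ' s).im) (Ici (0:ℝ)) s :=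
      (Complex.imCLM.hasFDerivAt.comp_hasDerivWithinAt s (hderiv s hs))
    have h1 : HasDerivWithinAt (fun t => (ψ t).re ^ 2 + (ψ t).im ^ 2)
        (2 * (ψ s).re ^ 1 * (ψ' s).re + 2 * (ψ s).im ^ 1 * (ψ' s).im) (Ici (0:ℝ)) s :=
      ((hre.pow 2).add (him.pow 2))
    have heq : (fun t => ‖ψ t‖ ^ 2) = fun t => (ψ t).re ^ 2 + (ψ t).im ^ 2 := by
      funext t
      rw [Complex.sq_norm, Complex.normSq_apply]; ring
    rw [heq]
    convert h1 using 1
    simp [hD, Complex.mul_re, Complex.conj_re, Complex.conj_im]; ring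
  have hDc : ContinuousOn D (Ici (0:ℝ)) := by
    apply ContinuousOn.mul continuousOn_const
    exact Complex.continuous_re.comp_continuousOn
      ((Complex.continuous_conj.comp_continuousOn hψc).mul hcont)
  -- pointwise bound on |D|
  have hDh : ∀ t, |D t| ≤ τ * ‖ψ t‖ ^ 2 + ‖ψ' t‖ ^ 2 / τ := by
    intro t
    have h1 : |D t| ≤ 2 * (‖ψ t‖ * ‖ψ' t‖) := by
      rw [hD, abs_mul, abs_two]
      have := Complex.abs_re_le_norm ((starRingEnd ℂ) (ψ t) * ψ' t)
      have h2 : ‖(starRingEnd ℂ) (ψ t) * ψ' t‖ = ‖ψ t‖ * ‖ψ' t‖ := by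
        rw [norm_mul, Complex.norm_conj]
      nlinarith
    have h3 : τ * ‖ψ t‖ ^ 2 + ‖ψ' t‖ ^ 2 / τ - 2 * (‖ψ t‖ * ‖ψ' t‖)
        = (τ * ‖ψ t‖ - ‖ψ' t‖) ^ 2 / τ := by
      field_simp; ring
    nlinarith [div_nonneg (sq_nonneg (τ * ‖ψ t‖ - ‖ψ' t‖)) hτ.le]
  -- integrability of the bounding function
  have hh_int : IntegrableOn (fun t => τ * ‖ψ t‖ ^ 2 + ‖ψ' t‖ ^ 2 / τ) (Ioi (0:ℝ)) :=
    (hint1.const_mul τ).add (hint2.div_const τ)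
  have hh_val : (∫ t in Ioi (0:ℝ), (τ * ‖ψ t‖ ^ 2 + ‖ψ' t‖ ^ 2 / τ)) = τ * I + J / τ := by
    rw [integral_add (hint1.const_mul τ) (hint2.div_const τ), integral_const_mul, integral_div]
  -- key estimate
  have key : ∀ y, x ≤ y → ‖ψ x‖ ^ 2 ≤ ‖ψ y‖ ^ 2 + (τ * I + J / τ) := by
    intro y hxy
    have hsub : Icc x y ⊆ Ici (0:ℝ) := fun t ht => le_trans hx ht.1
    have hsub' : Ioc x y ⊆ Ioi (0:ℝ) := fun t ht => lt_of_le_of_lt hx ht.1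
    have hDi : IntervalIntegrable D volume x y :=
      (hDc.mono (by rw [uIcc_of_le hxy]; exact hsub)).intervalIntegrable
    have hftc : ∫ t in x..y, D t = ‖ψ y‖ ^ 2 - ‖ψ x‖ ^ 2 := by
      apply intervalIntegral.integral_eq_sub_of_hasDeriv_right_of_le hxy
        (((hψc.mono hsub).norm).pow 2)
      · intro t ht
        have ht0 : (0:ℝ) ≤ t := le_trans hx ht.1.le
        exact (hDg t ht0).mono fun u hu => le_of_lt (lt_of_le_of_lt ht0 hu)
      · exact hDi
    have habs : |∫ t in x..y, D t| ≤ ∫ t in x..y, |D t| := by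
      exact intervalIntegral.abs_integral_le_integral_abs hxy
    have hmono : (∫ t in x..y, |D t|) ≤ ∫ t in x..y, (τ * ‖ψ t‖ ^ 2 + ‖ψ' t‖ ^ 2 / τ) := by
      apply intervalIntegral.integral_mono_on hxy
      · exact ((hDc.mono (by rw [uIcc_of_le hxy]; exact hsub)).abs).intervalIntegrable
      · rw [intervalIntegrable_iff_integrableOn_Ioc_of_le hxy]
        exact hh_int.mono_set hsub'
      · exact fun t _ => hDh t
    have hset : (∫ t in x..y, (τ * ‖ψ t‖ ^ 2 + ‖ψ' t‖ ^ 2 / τ)) ≤ τ * I + J / τ := by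
      rw [intervalIntegral.integral_of_le hxy, ← hh_val]
      exact setIntegral_mono_set hh_int
        (Filter.Eventually.of_forall fun t => by positivity)
        (HasSubset.Subset.eventuallyLE hsub')
    have h4 : -(∫ t in x..y, D t) ≤ ∫ t in x..y, |D t| :=
      (neg_le_abs _).trans habs
    linarith
  -- integrate the key estimate over y ∈ [x, x + 1/τ]
  set b := x + 1/τ with hb
  have hxb : x ≤ b := by rw [hb]; nlinarith [one_div_pos.mpr hτ]
  have hsubb : Icc x b ⊆ Ici (0:ℝ) := fun t ht => le_trans hx ht.1
  have hsubb' : Ioc x b ⊆ Ioi (0:ℝ) := fun t ht => lt_of_le_of_lt hx ht.1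
  have hgint : IntervalIntegrable (fun y => ‖ψ y‖ ^ 2) volume x b :=
    (((hψc.mono (by rw [uIcc_of_le hxb]; exact hsubb)).norm).pow 2).intervalIntegrable
  have hmono2 : (∫ _ in x..b, ‖ψ x‖ ^ 2) ≤ ∫ y in x..b, (‖ψ y‖ ^ 2 + (τ * I + J / τ)) := by
    apply intervalIntegral.integral_mono_on hxb intervalIntegrable_const
      (hgint.add intervalIntegrable_const)
    exact fun y hy => key y hy.1
  have hsplit : (∫ y in x..b, (‖ψ y‖ ^ 2 + (τ * I + J / τ)))
      = (∫ y in x..b, ‖ψ y‖ ^ 2) + (b - x) * (τ * I + J / τ) := by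
    rw [intervalIntegral.integral_add hgint intervalIntegrable_const,
      intervalIntegral.integral_const, smul_eq_mul]
  have hgle : (∫ y in x..b, ‖ψ y‖ ^ 2) ≤ I := by
    rw [intervalIntegral.integral_of_le hxb]
    exact setIntegral_mono_set hint1
      (Filter.Eventually.of_forall fun t => by positivity)
      (HasSubset.Subset.eventuallyLE hsubb')
  have hconst : (∫ _ in x..b, ‖ψ x‖ ^ 2) = (1/τ) * ‖ψ x‖ ^ 2 := by
    rw [intervalIntegral.integral_const, smul_eq_mul, hb]; ring_nf
  have hbx : b - x = 1/τ := by rw [hb]; ring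
  have hfin : (1/τ) * ‖ψ x‖ ^ 2 ≤ I + (1/τ) * (τ * I + J / τ) := by
    rw [← hconst]
    calc (∫ _ in x..b, ‖ψ x‖ ^ 2) ≤ ∫ y in x..b, (‖ψ y‖ ^ 2 + (τ * I + J / τ)) := hmono2
      _ = (∫ y in x..b, ‖ψ y‖ ^ 2) + (b - x) * (τ * I + J / τ) := hsplit
      _ ≤ I + (1/τ) * (τ * I + J / τ) := by rw [hbx]; linarith
  have hτ2 : (0:ℝ) < τ ^ 2 := by positivity
  have hτne : τ ≠ 0 := ne_of_gt hτ
  have h5 := mul_le_mul_of_nonneg_left hfin (le_of_lt hτ2)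
  have e1 : τ ^ 2 * ((1/τ) * ‖ψ x‖ ^ 2) = τ * ‖ψ x‖ ^ 2 := by field_simp
  have e2 : τ ^ 2 * (I + (1/τ) * (τ * I + J / τ)) = 2 * τ ^ 2 * I + J := by field_simp; ring
  linarith [h5]
end

section
/- Let d ≥ 1, k > 0, and let γ ∈ ℂ be a damping parameter with γ_r := Re γ ≥ 1 and γ_i := Im γ ≥ 1. Let Ω₀, C ⊆ ℝ^d be disjoint measurable sets, let t : ℝ^d → ℝ^d be a measurable vector field with |t(x)| = 1 for all x, and let φ : ℝ^d → ℂ be continuously differentiable with compact support. Define ∂×φ(x) as the derivative of φ at x in the direction t(x), ∇φ(x) ∈ ℂ^d as the vector of partial derivatives of φ at x, |∇⊥φ(x)|² := |∇φ(x)|² − |∂×φ(x)|², and set B := −k²(∫_{Ω₀} |φ|² + γ·∫_C |φ|²) + ∫_{Ω₀} |∇φ|² + γ·∫_C |∇⊥φ|² + γ⁻¹·∫_C |∂×φ|². Then (2γ_r/|γ|²)·∫_C |∂×φ|² ≤ Re((i·conj(γ)/γ_i)·B) + k²·∫_{Ω₀} |φ|². -/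
open MeasureTheory

theorem stmt8 (d : ℕ) (hd : 1 ≤ d) (k : ℝ) (hk : 0 < k)
    (γ : ℂ) (hr : 1 ≤ γ.re) (hi : 1 ≤ γ.im)
    (Ω₀ C : Set (EuclideanSpace ℝ (Fin d)))
    (hΩ₀ : MeasurableSet Ω₀) (hC : MeasurableSet C) (hdisj : Disjoint Ω₀ C)
    (t : EuclideanSpace ℝ (Fin d) → EuclideanSpace ℝ (Fin d))
    (ht : Measurable t) (htunit : ∀ x, ‖t x‖ = 1)
    (φ : EuclideanSpace ℝ (Fin d) → ℂ)
    (hφ : ContDiff ℝ 1 φ) (hsupp : HasCompactSupport φ)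
    (dxφ : EuclideanSpace ℝ (Fin d) → ℂ)
    (hdx : ∀ x, dxφ x = fderiv ℝ φ x (t x))
    (g : EuclideanSpace ℝ (Fin d) → ℝ)
    (hg : ∀ x, g x = ∑ i, ‖fderiv ℝ φ x (EuclideanSpace.single i 1)‖ ^ 2)
    (gperp : EuclideanSpace ℝ (Fin d) → ℝ)
    (hgperp : ∀ x, gperp x = g x - ‖dxφ x‖ ^ 2)
    (B : ℂ)
    (hB : B = -(k : ℂ) ^ 2 *
          (((∫ x in Ω₀, ‖φ x‖ ^ 2 : ℝ) : ℂ) + γ * ((∫ x in C, ‖φ x‖ ^ 2 : ℝ) : ℂ))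
        + ((∫ x in Ω₀, g x : ℝ) : ℂ) + γ * ((∫ x in C, gperp x : ℝ) : ℂ)
        + γ⁻¹ * ((∫ x in C, ‖dxφ x‖ ^ 2 : ℝ) : ℂ)) :
    2 * γ.re / ‖γ‖ ^ 2 * (∫ x in C, ‖dxφ x‖ ^ 2) ≤
      ((Complex.I * (starRingEnd ℂ γ) / (γ.im : ℂ)) * B).re +
        k ^ 2 * ∫ x in Ω₀, ‖φ x‖ ^ 2 := by
  set P0 : ℝ := ∫ x in Ω₀, ‖φ x‖ ^ 2 with hP0
  set PC : ℝ := ∫ x in C, ‖φ x‖ ^ 2 with hPC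
  set G0 : ℝ := ∫ x in Ω₀, g x with hG0
  set GC : ℝ := ∫ x in C, gperp x with hGC
  set D : ℝ := ∫ x in C, ‖dxφ x‖ ^ 2 with hD
  have hγre : (0:ℝ) < γ.re := lt_of_lt_of_le one_pos hr
  have hγim : γ.im ≠ 0 := by linarith
  have hns : Complex.normSq γ ≠ 0 := by
    simp [Complex.normSq_apply]
    nlinarith
  have hnorm : ‖γ‖ ^ 2 = γ.re ^ 2 + γ.im ^ 2 := by
    rw [Complex.sq_norm, Complex.normSq_apply]; ring
  have hns' : γ.re ^ 2 + γ.im ^ 2 ≠ 0 := by nlinarith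
  set c : ℂ := Complex.I * (starRingEnd ℂ γ) / (γ.im : ℂ) with hc
  have h1 : ∀ r : ℝ, (c * (r : ℂ)).re = r := by
    intro r
    rw [hc]
    simp only [div_mul_eq_mul_div, Complex.div_re, Complex.mul_re, Complex.mul_im,
      Complex.I_re, Complex.I_im, Complex.conj_re, Complex.conj_im, Complex.ofReal_re,
      Complex.ofReal_im, Complex.normSq_apply]
    field_simp
    ring
  have h2 : ∀ r : ℝ, (c * (γ * (r : ℂ))).re = 0 := by
    intro r
    rw [hc]
    simp only [div_mul_eq_mul_div, Complex.div_re, Complex.mul_re, Complex.mul_im,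
      Complex.I_re, Complex.I_im, Complex.conj_re, Complex.conj_im, Complex.ofReal_re,
      Complex.ofReal_im, Complex.normSq_apply]
    field_simp
    ring
  have h3 : ∀ r : ℝ, (c * (γ⁻¹ * (r : ℂ))).re = 2 * γ.re / (γ.re ^ 2 + γ.im ^ 2) * r := by
    intro r
    rw [hc]
    simp only [div_mul_eq_mul_div, Complex.div_re, Complex.mul_re, Complex.mul_im,
      Complex.inv_re, Complex.inv_im, Complex.I_re, Complex.I_im, Complex.conj_re,
      Complex.conj_im, Complex.ofReal_re, Complex.ofReal_im, Complex.normSq_apply]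
    field_simp
    ring
  have expand : c * B = c * ((-(k ^ 2) * P0 : ℝ) : ℂ) + c * (γ * ((-(k ^ 2) * PC : ℝ) : ℂ))
      + c * ((G0 : ℝ) : ℂ) + c * (γ * ((GC : ℝ) : ℂ)) + c * (γ⁻¹ * ((D : ℝ) : ℂ)) := by
    rw [hB]
    push_cast
    ring
  have key : (c * B).re = -(k ^ 2) * P0 + G0 + 2 * γ.re / (γ.re ^ 2 + γ.im ^ 2) * D := by
    rw [expand]
    simp only [Complex.add_re, h1, h2, h3]
    ring
  have hG0 : 0 ≤ G0 := by
    rw [hG0]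
    apply setIntegral_nonneg hΩ₀
    intro x _
    rw [hg]
    exact Finset.sum_nonneg fun i _ => sq_nonneg _
  rw [key, hnorm]
  clear_value P0 PC G0 GC D c
  linarith
end

section
/- Let d ≥ 1, k > 0, and let γ ∈ ℂ be a damping parameter with γ_r := Re γ ≥ 1 and γ_i := Im γ ≥ 1. Let Ω₀, C ⊆ ℝ^d be disjoint measurable sets, let t : ℝ^d → ℝ^d be a measurable vector field with |t(x)| = 1 for all x, and let φ : ℝ^d → ℂ be continuously differentiable with compact support. Define ∂×φ(x) as the derivative of φ at x in the direction t(x), ∇φ(x) ∈ ℂ^d as the vector of partial derivatives of φ at x, |∇⊥φ(x)|² := |∇φ(x)|² − |∂×φ(x)|², and set B := −k²(∫_{Ω₀} |φ|² + γ·∫_C |φ|²) + ∫_{Ω₀} |∇φ|² + γ·∫_C |∇⊥φ|² + γ⁻¹·∫_C |∂×φ|². Then the identity Re((i·conj(γ)/γ_i)·B) = (2γ_r/|γ|²)·∫_C |∂×φ|² + ∫_{Ω₀} |∇φ|² − k²·∫_{Ω₀} |φ|² holds. -/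
open MeasureTheory

theorem stmt9 (d : ℕ) (hd : 1 ≤ d) (k : ℝ) (hk : 0 < k)
    (γ : ℂ) (hr : 1 ≤ γ.re) (hi : 1 ≤ γ.im)
    (Ω₀ C : Set (EuclideanSpace ℝ (Fin d)))
    (hΩ₀ : MeasurableSet Ω₀) (hC : MeasurableSet C) (hdisj : Disjoint Ω₀ C)
    (t : EuclideanSpace ℝ (Fin d) → EuclideanSpace ℝ (Fin d))
    (ht : Measurable t) (htunit : ∀ x, ‖t x‖ = 1)
    (φ : EuclideanSpace ℝ (Fin d) → ℂ)
    (hφ : ContDiff ℝ 1 φ) (hsupp : HasCompactSupport φ)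
    (dxφ : EuclideanSpace ℝ (Fin d) → ℂ)
    (hdx : ∀ x, dxφ x = fderiv ℝ φ x (t x))
    (g : EuclideanSpace ℝ (Fin d) → ℝ)
    (hg : ∀ x, g x = ∑ i, ‖fderiv ℝ φ x (EuclideanSpace.single i 1)‖ ^ 2)
    (gperp : EuclideanSpace ℝ (Fin d) → ℝ)
    (hgperp : ∀ x, gperp x = g x - ‖dxφ x‖ ^ 2)
    (B : ℂ)
    (hB : B = -(k : ℂ) ^ 2 *
          (((∫ x in Ω₀, ‖φ x‖ ^ 2 : ℝ) : ℂ) + γ * ((∫ x in C, ‖φ x‖ ^ 2 : ℝ) : ℂ))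
        + ((∫ x in Ω₀, g x : ℝ) : ℂ) + γ * ((∫ x in C, gperp x : ℝ) : ℂ)
        + γ⁻¹ * ((∫ x in C, ‖dxφ x‖ ^ 2 : ℝ) : ℂ)) :
    ((Complex.I * (starRingEnd ℂ γ) / (γ.im : ℂ)) * B).re =
      2 * γ.re / ‖γ‖ ^ 2 * (∫ x in C, ‖dxφ x‖ ^ 2) +
        (∫ x in Ω₀, g x) - k ^ 2 * ∫ x in Ω₀, ‖φ x‖ ^ 2 := by
  subst hB
  have hb : γ.im ≠ 0 := by linarith
  have hns : γ.re ^ 2 + γ.im ^ 2 ≠ 0 := by nlinarith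
  have hnorm : ‖γ‖ ^ 2 = γ.re ^ 2 + γ.im ^ 2 := by
    rw [Complex.sq_norm, Complex.normSq_apply]; ring
  rw [hnorm]
  have hk2 : -(k : ℂ) ^ 2 = ((-(k ^ 2) : ℝ) : ℂ) := by push_cast; ring
  rw [hk2]
  simp only [Complex.div_re, Complex.div_im, Complex.mul_re, Complex.mul_im, Complex.add_re,
    Complex.add_im, Complex.I_re, Complex.I_im, Complex.ofReal_re, Complex.ofReal_im,
    Complex.conj_re, Complex.conj_im, Complex.inv_re, Complex.inv_im,
    Complex.normSq_apply, Complex.normSq_ofReal]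
  field_simp
  ring
end

section
/- Let d ≥ 1, k ∈ ℝ, and let γ ∈ ℂ be a damping parameter with Re γ ≥ 1 and Im γ ≥ 1. Let t ∈ ℝ^d be a fixed unit vector and let φ : ℝ^d → ℂ be continuously differentiable with compact support. Define ∂×φ(x) as the derivative of φ at x in the direction t, ∇φ(x) ∈ ℂ^d as the vector of partial derivatives of φ at x, and |∇⊥φ(x)|² := |∇φ(x)|² − |∂×φ(x)|². If the complex number −k²·∫_{ℝ^d} |φ|² + ∫_{ℝ^d} |∇⊥φ|² + γ⁻²·∫_{ℝ^d} |∂×φ|² equals 0, then φ is identically zero. -/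
open MeasureTheory

theorem stmt10 (d : ℕ) (hd : 1 ≤ d) (k : ℝ)
    (γ : ℂ) (hr : 1 ≤ γ.re) (hi : 1 ≤ γ.im)
    (t : EuclideanSpace ℝ (Fin d)) (ht : ‖t‖ = 1)
    (φ : EuclideanSpace ℝ (Fin d) → ℂ)
    (hφ : ContDiff ℝ 1 φ) (hsupp : HasCompactSupport φ)
    (h0 : -(k : ℂ) ^ 2 * ((∫ x, ‖φ x‖ ^ 2 : ℝ) : ℂ)
        + ((∫ x, ((∑ i, ‖fderiv ℝ φ x (EuclideanSpace.single i 1)‖ ^ 2)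
            - ‖fderiv ℝ φ x t‖ ^ 2) : ℝ) : ℂ)
        + (γ ^ 2)⁻¹ * ((∫ x, ‖fderiv ℝ φ x t‖ ^ 2 : ℝ) : ℂ) = 0) :
    ∀ x, φ x = 0 := by
  have hφd : Differentiable ℝ φ := hφ.differentiable one_ne_zero
  have hfc : Continuous (fderiv ℝ φ) := hφ.continuous_fderiv one_ne_zero
  set g : EuclideanSpace ℝ (Fin d) → ℝ := fun x => ‖fderiv ℝ φ x t‖ ^ 2 with hgdef
  have hgc : Continuous g := by
    exact (((ContinuousLinearMap.apply ℝ ℂ t).continuous.comp hfc).norm.pow 2)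
  have hgs : HasCompactSupport g := (hsupp.fderiv ℝ).comp_left (g := fun L : _ →L[ℝ] ℂ => ‖L t‖ ^ 2) (by simp)
  have hgint : Integrable g := hgc.integrable_of_hasCompactSupport hgs
  -- take imaginary part
  have him := congrArg Complex.im h0
  have hinv : ((γ ^ 2)⁻¹).im ≠ 0 := by
    rw [Complex.inv_im]
    have h1 : (γ ^ 2).im = 2 * (γ.re * γ.im) := by
      simp [pow_two, Complex.mul_im]; ring
    have h2 : (0:ℝ) < (γ ^ 2).im := by
      rw [h1]; positivity
    have h3 : (0:ℝ) < Complex.normSq (γ ^ 2) := by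
      apply Complex.normSq_pos.mpr
      intro h
      rw [h] at h2; simp at h2
    have : -(γ ^ 2).im / Complex.normSq (γ ^ 2) < 0 := by
      apply div_neg_of_neg_of_pos (by linarith) h3
    linarith
  simp only [Complex.add_im, Complex.mul_im, Complex.ofReal_im, Complex.ofReal_re,
    Complex.zero_im, mul_zero, add_zero, zero_mul] at him
  have hk : (-(k : ℂ) ^ 2).im = 0 := by simp [pow_two]
  rw [hk] at him
  simp at him
  have hC : (∫ x, g x) = 0 := by
    rcases him with (h | h) | h
    · have : (γ ^ 2).im = 2 * (γ.re * γ.im) := by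
        simp [pow_two, Complex.mul_im]; ring
      rw [this] at h; nlinarith
    · rw [h] at hr; simp at hr; linarith
    · exact h
  have hae : ∀ x, g x = 0 := by
    have h1 : g =ᵐ[volume] 0 := by
      rw [← MeasureTheory.integral_eq_zero_iff_of_nonneg (fun x => by positivity) hgint]
      exact hC
    have := (hgc.ae_eq_iff_eq volume continuous_const).mp h1
    intro x; exact congrFun this x
  have hg0 : ∀ x, fderiv ℝ φ x t = 0 := by
    intro x
    have := hae x
    simpa [hgdef, pow_eq_zero_iff] using this
  -- conclude
  intro x
  obtain ⟨R, hR0, hRs⟩ : ∃ R : ℝ, 0 ≤ R ∧ tsupport φ ⊆ Metric.closedBall 0 R := by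
    obtain ⟨R, hRs⟩ := hsupp.isCompact.isBounded.subset_closedBall 0
    exact ⟨max R 0, le_max_right _ _, hRs.trans (Metric.closedBall_subset_closedBall (le_max_left _ _))⟩
  set S : ℝ := R + ‖x‖ + 1 with hS
  have hψ : ∀ s : ℝ, HasDerivAt (fun s : ℝ => φ (x + s • t)) (fderiv ℝ φ (x + s • t) t) s := by
    intro s
    have hline : HasDerivAt (fun s : ℝ => x + s • t) t s := by
      simpa using ((hasDerivAt_id s).smul_const t).const_add x
    exact (hφd (x + s • t)).hasFDerivAt.comp_hasDerivAt s hline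
  have hconst : φ (x + (0:ℝ) • t) = φ (x + S • t) := by
    apply is_const_of_deriv_eq_zero (f := fun s : ℝ => φ (x + s • t))
    · intro s; exact (hψ s).differentiableAt
    · intro s; rw [(hψ s).deriv, hg0]
  have hout : φ (x + S • t) = 0 := by
    apply image_eq_zero_of_notMem_tsupport
    intro hmem
    have := hRs hmem
    rw [Metric.mem_closedBall, dist_zero_right] at this
    have h1 : ‖S • t‖ ≤ ‖x + S • t‖ + ‖x‖ := by
      have h1' := norm_sub_le (x + S • t) x
      rwa [add_sub_cancel_left] at h1'
    have h2 : ‖S • t‖ = S := by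
      rw [norm_smul, ht, mul_one, Real.norm_eq_abs, abs_of_pos (by positivity)]
    nlinarith [norm_nonneg x]
  simpa using hconst.trans hout
end
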